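/- Let q ≥ δ+1 with δ ≥ 2. Suppose V₁ = Span{u₁, v₁} and V₂ = Span{u₂, v₂} are subspaces of F_q^3 arising from the lower part of a parity-check matrix of an optimal (n, k, d = 2δ+2; r = 2, δ) LRC with disjoint repair groups. Then: (i) dim(V_i) = 2 for each i; and (ii) for any j ≠ i, the vectors u_i, v_i, and a_m u_i + b_m v_i (for every pair (a_m, b_m) ∈ F_q^* × F_q^* with a_m p_{i,m} + b_m q_{i,m} = 0, m ∈ [δ−1]) do not belong to V_j. -/

import Mathlib

def coefV {F : Type*} [Zero F] (δ : ℕ) (a b : F) (f : Fin (δ - 1) → F) : Fin (δ + 1) → F :=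
  fun c => if h : (c : ℕ) < δ - 1 then f ⟨c, h⟩ else if (c : ℕ) = δ - 1 then a else b

def oneG {F : Type*} [Zero F] [DecidableEq F] {δ ℓ : ℕ} (i : Fin ℓ) (a b : F)
    (f : Fin (δ - 1) → F) : Fin ℓ × Fin (δ + 1) → F :=
  fun kc => if kc.1 = i then coefV δ a b f kc.2 else 0

lemma coefV_d1 {F : Type*} [Zero F] {δ : ℕ} (hδ : 1 ≤ δ) (a b : F) (f : Fin (δ - 1) → F) :
    coefV δ a b f ⟨δ - 1, by omega⟩ = a := by
  show (if h : (δ - 1 : ℕ) < δ - 1 then f ⟨δ - 1, h⟩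
    else if (δ - 1 : ℕ) = δ - 1 then a else b) = a
  rw [dif_neg (by omega), if_pos rfl]

lemma coefV_d2 {F : Type*} [Zero F] {δ : ℕ} (hδ : 1 ≤ δ) (a b : F) (f : Fin (δ - 1) → F) :
    coefV δ a b f ⟨δ, by omega⟩ = b := by
  show (if h : (δ : ℕ) < δ - 1 then f ⟨δ, h⟩ else if (δ : ℕ) = δ - 1 then a else b) = b
  rw [dif_neg (by omega), if_neg (by omega)]

lemma coefV_e {F : Type*} [Zero F] {δ : ℕ} (a b : F) (f : Fin (δ - 1) → F) (m : Fin (δ - 1)) :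
    coefV δ a b f (m.castLE (by omega)) = f m := by
  show (if h : ((m : ℕ)) < δ - 1 then f ⟨m, h⟩ else if ((m : ℕ)) = δ - 1 then a else b) = f m
  rw [dif_pos m.2]

lemma sum_split {F : Type*} [AddCommMonoid F] {δ : ℕ} (hδ : 1 ≤ δ) (g : Fin (δ + 1) → F) :
    ∑ c : Fin (δ + 1), g c =
      (∑ c ∈ Finset.univ.filter (fun c : Fin (δ + 1) => (c : ℕ) < δ - 1), g c)
        + (g ⟨δ - 1, by omega⟩ + g ⟨δ, by omega⟩) := by
  rw [← Finset.sum_filter_add_sum_filter_not Finset.univ (fun c : Fin (δ + 1) => (c : ℕ) < δ - 1) g]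
  congr 1
  have he : Finset.univ.filter (fun c : Fin (δ + 1) => ¬ (c : ℕ) < δ - 1)
      = {(⟨δ - 1, by omega⟩ : Fin (δ + 1)), ⟨δ, by omega⟩} := by
    ext c
    simp only [Finset.mem_filter, Finset.mem_univ, true_and, Finset.mem_insert,
      Finset.mem_singleton, Fin.ext_iff, Fin.val_mk]
    have := c.2
    omega
  rw [he, Finset.sum_pair (by simp only [ne_eq, Fin.mk.injEq]; omega)]

lemma sum_col_inl {F : Type*} [Field F] {δ : ℕ} (hδ : 2 ≤ δ) (P Q a b : F)
    (f : Fin (δ - 1) → F) (s : Fin (δ - 1)) :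
    (∑ c : Fin (δ + 1),
      (if h : (c : ℕ) < δ - 1 then (if (c : ℕ) = (s : ℕ) then (1 : F) else 0)
        else if (c : ℕ) = δ - 1 then P else Q) * coefV δ a b f c)
      = f s + a * P + b * Q := by
  rw [sum_split (by omega)]
  have hmem : (s.castLE (by omega) : Fin (δ + 1)) ∈
      Finset.univ.filter (fun c : Fin (δ + 1) => (c : ℕ) < δ - 1) := by
    simp only [Finset.mem_filter, Finset.mem_univ, true_and, Fin.coe_castLE]
    exact s.2
  have hterm : ∀ c ∈ Finset.univ.filter (fun c : Fin (δ + 1) => (c : ℕ) < δ - 1),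
      (if h : (c : ℕ) < δ - 1 then (if (c : ℕ) = (s : ℕ) then (1 : F) else 0)
        else if (c : ℕ) = δ - 1 then P else Q) * coefV δ a b f c
      = if c = s.castLE (by omega) then f s else 0 := by
    intro c hc
    rw [Finset.mem_filter] at hc
    have hc2 := hc.2
    rw [dif_pos hc2]
    show (if (c : ℕ) = (s : ℕ) then (1 : F) else 0) *
      (if h : (c : ℕ) < δ - 1 then f ⟨c, h⟩ else if (c : ℕ) = δ - 1 then a else b) = _
    rw [dif_pos hc2]
    by_cases hcs : c = s.castLE (by omega)
    · have hv : (c : ℕ) = (s : ℕ) := by rw [hcs]; rfl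
      rw [if_pos hv, if_pos hcs, one_mul]
      exact congrArg f (Fin.ext hv)
    · have hv : ¬ (c : ℕ) = (s : ℕ) := fun hv => hcs (Fin.ext hv)
      rw [if_neg hv, zero_mul, if_neg hcs]
  have h1 : (∑ c ∈ Finset.univ.filter (fun c : Fin (δ + 1) => (c : ℕ) < δ - 1),
      (if h : (c : ℕ) < δ - 1 then (if (c : ℕ) = (s : ℕ) then (1 : F) else 0)
        else if (c : ℕ) = δ - 1 then P else Q) * coefV δ a b f c) = f s := by
    rw [Finset.sum_congr rfl hterm, Finset.sum_ite_eq' _ _ (fun _ => f s), if_pos hmem]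
  rw [h1, coefV_d1 (by omega), coefV_d2 (by omega)]
  rw [show ((⟨δ - 1, by omega⟩ : Fin (δ + 1)) : ℕ) = δ - 1 from rfl,
    show ((⟨δ, by omega⟩ : Fin (δ + 1)) : ℕ) = δ from rfl]
  rw [dif_neg (by omega), if_pos rfl, dif_neg (by omega), if_neg (by omega)]
  ring

lemma sum_col_inr {F : Type*} [Field F] {δ : ℕ} (hδ : 2 ≤ δ) (U V a b : F)
    (f : Fin (δ - 1) → F) :
    (∑ c : Fin (δ + 1),
      (if (c : ℕ) < δ - 1 then (0 : F) else if (c : ℕ) = δ - 1 then U else V)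
        * coefV δ a b f c) = a * U + b * V := by
  rw [sum_split (by omega)]
  have h1 : (∑ c ∈ Finset.univ.filter (fun c : Fin (δ + 1) => (c : ℕ) < δ - 1),
      (if (c : ℕ) < δ - 1 then (0 : F) else if (c : ℕ) = δ - 1 then U else V)
        * coefV δ a b f c) = 0 := by
    apply Finset.sum_eq_zero
    intro c hc
    rw [Finset.mem_filter] at hc
    rw [if_pos hc.2, zero_mul]
  rw [h1, coefV_d1 (by omega), coefV_d2 (by omega)]
  rw [show ((⟨δ - 1, by omega⟩ : Fin (δ + 1)) : ℕ) = δ - 1 from rfl,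
    show ((⟨δ, by omega⟩ : Fin (δ + 1)) : ℕ) = δ from rfl]
  rw [if_neg (by omega), if_pos rfl, if_neg (by omega), if_neg (by omega)]
  ring

lemma mulVec_oneG {F : Type*} [Field F] [DecidableEq F] {δ ℓ : ℕ} (hδ : 2 ≤ δ)
    (p q : Fin ℓ → Fin (δ - 1) → F) (uu vv : Fin ℓ → Fin 3 → F)
    (H : Matrix ((Fin ℓ × Fin (δ - 1)) ⊕ Fin 3) (Fin ℓ × Fin (δ + 1)) F)
    (hH : ∀ row col, H row col = Sum.elim
      (fun rs : Fin ℓ × Fin (δ - 1) =>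
        if rs.1 = col.1 then
          (if h : (col.2 : ℕ) < δ - 1 then (if (col.2 : ℕ) = (rs.2 : ℕ) then 1 else 0)
           else if (col.2 : ℕ) = δ - 1 then p rs.1 rs.2 else q rs.1 rs.2)
        else 0)
      (fun t : Fin 3 =>
        if (col.2 : ℕ) < δ - 1 then 0
        else if (col.2 : ℕ) = δ - 1 then uu col.1 t else vv col.1 t) row)
    (i : Fin ℓ) (a b : F) (f : Fin (δ - 1) → F) :
    H.mulVec (oneG i a b f) = Sum.elim
      (fun ks : Fin ℓ × Fin (δ - 1) =>
        if ks.1 = i then f ks.2 + a * p i ks.2 + b * q i ks.2 else 0)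
      (fun t : Fin 3 => a * uu i t + b * vv i t) := by
  funext row
  have h1 : H.mulVec (oneG i a b f) row
      = ∑ c : Fin (δ + 1), H row (i, c) * coefV δ a b f c := by
    show (∑ col : Fin ℓ × Fin (δ + 1), H row col * oneG i a b f col) = _
    rw [Fintype.sum_prod_type]
    rw [Finset.sum_eq_single i]
    · apply Finset.sum_congr rfl
      intro c _
      simp [oneG]
    · intro k _ hk
      apply Finset.sum_eq_zero
      intro c _
      simp [oneG, hk]
    · simp
  rw [h1]
  rcases row with ⟨k, s⟩ | t
  · simp only [hH, Sum.elim_inl]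
    by_cases hk : k = i
    · subst hk
      simp only [eq_self_iff_true, if_true]
      exact sum_col_inl hδ (p k s) (q k s) a b f s
    · rw [if_neg hk]
      apply Finset.sum_eq_zero
      intro c _
      rw [if_neg hk, zero_mul]
  · simp only [hH, Sum.elim_inr]
    exact sum_col_inr hδ (uu i t) (vv i t) a b f

lemma hn_add_le {ι F : Type*} [Fintype ι] [DecidableEq F] [AddCommGroup F] (x y : ι → F) :
    hammingNorm (x + y) ≤ hammingNorm x + hammingNorm y := by
  have h1 : hammingDist (x + y) (0 : ι → F) ≤ hammingDist (x + y) y + hammingDist y 0 :=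
    hammingDist_triangle _ _ _
  rw [hammingDist_zero_right, hammingDist_zero_right] at h1
  have e : -y + (x + y) = x := by abel
  rwa [hammingDist_comm (x + y) y, hammingDist_eq_hammingNorm, e] at h1

lemma oneG_first {F : Type*} [Zero F] [DecidableEq F] {δ ℓ : ℕ} (i : Fin ℓ) (a b : F)
    (f : Fin (δ - 1) → F) (kc : Fin ℓ × Fin (δ + 1)) (h : oneG i a b f kc ≠ 0) :
    kc.1 = i ∧ oneG i a b f kc = coefV δ a b f kc.2 := by
  by_cases hk : kc.1 = i
  · exact ⟨hk, by simp [oneG, hk]⟩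
  · exact absurd (by simp [oneG, hk]) h

lemma hn_oneG {F : Type*} [Zero F] [DecidableEq F] {δ ℓ : ℕ} (i : Fin ℓ) (a b : F)
    (f : Fin (δ - 1) → F) :
    hammingNorm (oneG i a b f) ≤ hammingNorm (coefV δ a b f) := by
  apply Finset.card_le_card_of_injOn (fun kc => kc.2)
  · intro kc hkc
    simp only [Finset.coe_filter, Set.mem_setOf_eq, Finset.mem_filter, Finset.mem_univ, true_and] at hkc ⊢
    obtain ⟨h1, h2⟩ := oneG_first i a b f kc hkc
    rw [← h2]; exact hkc
  · intro x hx y hy hxy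
    simp only [Finset.coe_filter, Set.mem_setOf_eq, Finset.mem_univ, true_and] at hx hy
    have hx1 := (oneG_first i a b f x hx).1
    have hy1 := (oneG_first i a b f y hy).1
    exact Prod.ext (hx1.trans hy1.symm) hxy

lemma hn_le_of_zero {ι F : Type*} [Fintype ι] [DecidableEq ι] [DecidableEq F] [Zero F]
    (x : ι → F) (m : ι) (hm : x m = 0) : hammingNorm x ≤ Fintype.card ι - 1 := by
  have hsub : Finset.univ.filter (fun c => x c ≠ 0) ⊆ Finset.univ.erase m := by
    intro c hc
    simp only [Finset.mem_filter, Finset.mem_univ, true_and] at hc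
    refine Finset.mem_erase.2 ⟨fun h => hc (h ▸ hm), Finset.mem_univ _⟩
  calc hammingNorm x ≤ (Finset.univ.erase m).card := Finset.card_le_card hsub
    _ = Fintype.card ι - 1 := by
      rw [Finset.card_erase_of_mem (Finset.mem_univ m), Finset.card_univ]

lemma hn_coefV {F : Type*} [Zero F] [DecidableEq F] {δ : ℕ} (a b : F) (f : Fin (δ - 1) → F) :
    hammingNorm (coefV δ a b f) ≤ δ + 1 := by
  simpa using (hammingNorm_le_card_fintype (x := coefV δ a b f))


/-- Lemma 3: let `C` be a `q`-ary optimal `(n, k, d = 2δ+2; r = 2, δ)`-LRC (`q ≥ δ+1`)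
with disjoint repair groups and parity-check matrix in standard form: `ℓ` diagonal blocks
`(I_{δ−1} | pᵢ | qᵢ)`, each the generator matrix of a `[δ+1, δ−1, 3]` MDS code with all
entries of `pᵢ, qᵢ` nonzero, and lower blocks `(0 | uᵢ | vᵢ)` with `uᵢ, vᵢ ∈ F_q³`.
Setting `Vᵢ = Span{uᵢ, vᵢ}`, then: (i) `dim Vᵢ = 2`; and (ii) for any `j ≠ i` the vectors
`uᵢ`, `vᵢ` and `aₘ uᵢ + bₘ vᵢ` (for every `(aₘ, bₘ) ∈ F* × F*` with
`aₘ p_{i,m} + bₘ q_{i,m} = 0`, `m ∈ [δ−1]`) do not belong to `Vⱼ`. -/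
theorem stmt_5 {F : Type*} [Field F] [Fintype F] [DecidableEq F]
    (Q δ ℓ : ℕ) (hq : Fintype.card F = Q) (hQδ : δ + 1 ≤ Q) (hδ : 2 ≤ δ) (hℓ : 0 < ℓ)
    (p q : Fin ℓ → Fin (δ - 1) → F)
    (hp : ∀ i m, p i m ≠ 0) (hqz : ∀ i m, q i m ≠ 0)
    (uu vv : Fin ℓ → Fin 3 → F)
    (H : Matrix ((Fin ℓ × Fin (δ - 1)) ⊕ Fin 3) (Fin ℓ × Fin (δ + 1)) F)
    (hH : ∀ row col, H row col = Sum.elim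
      (fun rs : Fin ℓ × Fin (δ - 1) =>
        if rs.1 = col.1 then
          (if h : (col.2 : ℕ) < δ - 1 then (if (col.2 : ℕ) = (rs.2 : ℕ) then 1 else 0)
           else if (col.2 : ℕ) = δ - 1 then p rs.1 rs.2 else q rs.1 rs.2)
        else 0)
      (fun t : Fin 3 =>
        if (col.2 : ℕ) < δ - 1 then 0
        else if (col.2 : ℕ) = δ - 1 then uu col.1 t else vv col.1 t) row)
    (hMDS : ∀ i : Fin ℓ, ∀ t : Finset (Fin (δ + 1)), t.card = δ - 1 →
      LinearIndependent F (fun c : t => fun s : Fin (δ - 1) =>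
        H (Sum.inl (i, s)) (i, c.1)))
    (hdist : ∀ x : Fin ℓ × Fin (δ + 1) → F,
      H.mulVec x = 0 → x ≠ 0 → 2 * δ + 2 ≤ hammingNorm x) :
    (∀ i : Fin ℓ,
      Module.finrank F (Submodule.span F {uu i, vv i} : Submodule F (Fin 3 → F)) = 2) ∧
    (∀ i j : Fin ℓ, j ≠ i →
      uu i ∉ Submodule.span F {uu j, vv j} ∧
      vv i ∉ Submodule.span F {uu j, vv j} ∧
      ∀ m : Fin (δ - 1), ∀ a b : F, a ≠ 0 → b ≠ 0 → a * p i m + b * q i m = 0 →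
        a • uu i + b • vv i ∉ Submodule.span F {uu j, vv j}) := by
  have hδ1 : 1 ≤ δ := by omega
  constructor
  · -- part (i)
    intro i
    have hind : LinearIndependent F ![uu i, vv i] := by
      rw [LinearIndependent.pair_iff]
      intro s t hst
      by_contra hc
      have hne : s ≠ 0 ∨ t ≠ 0 := by tauto
      set x : Fin ℓ × Fin (δ + 1) → F :=
        oneG i s t (fun m => -(s * p i m + t * q i m)) with hx
      have hmv : H.mulVec x = 0 := by
        rw [hx, mulVec_oneG hδ p q uu vv H hH]
        funext row
        rcases row with ⟨k, w⟩ | w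
        · simp only [Sum.elim_inl, Pi.zero_apply]
          by_cases hk : (k, w).1 = i
          · rw [if_pos hk]; ring
          · rw [if_neg hk]
        · simp only [Sum.elim_inr, Pi.zero_apply]
          have h2 := congrFun hst w
          simpa using h2
      have hxne : x ≠ 0 := by
        intro h0
        rcases hne with hs | ht
        · apply hs
          have h3 := congrFun h0 (i, (⟨δ - 1, by omega⟩ : Fin (δ + 1)))
          simpa [hx, oneG, coefV_d1 hδ1] using h3
        · apply ht
          have h3 := congrFun h0 (i, (⟨δ, by omega⟩ : Fin (δ + 1)))
          simpa [hx, oneG, coefV_d2 hδ1] using h3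
      have hlow := hdist x hmv hxne
      have hhi : hammingNorm x ≤ δ + 1 :=
        le_trans (hn_oneG _ _ _ _) (hn_coefV _ _ _)
      omega
    have hr : ({uu i, vv i} : Set (Fin 3 → F)) = Set.range ![uu i, vv i] := by
      rw [Matrix.range_cons_cons_empty]
    rw [hr]
    simpa using finrank_span_eq_card hind
  · -- part (ii)
    intro i j hji
    have key : ∀ (a b : F) (f : Fin (δ - 1) → F) (m : Fin (δ + 1)),
        (∀ s, f s + a * p i s + b * q i s = 0) → coefV δ a b f m = 0 →
        (∃ m', coefV δ a b f m' ≠ 0) →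
        a • uu i + b • vv i ∉ Submodule.span F {uu j, vv j} := by
      intro a b f m hf hm hm' hmem
      obtain ⟨m', hm'⟩ := hm'
      obtain ⟨c, d, hcd⟩ := Submodule.mem_span_pair.1 hmem
      set g : Fin (δ - 1) → F := fun s => c * p j s + d * q j s with hg
      set x := oneG i a b f + oneG j (-c) (-d) g with hx
      have hmv : H.mulVec x = 0 := by
        rw [hx, Matrix.mulVec_add, mulVec_oneG hδ p q uu vv H hH,
          mulVec_oneG hδ p q uu vv H hH]
        funext row
        rcases row with ⟨k, w⟩ | w
        · simp only [Pi.add_apply, Sum.elim_inl, Pi.zero_apply]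
          have h1 : (if (k, w).1 = i then f (k, w).2 + a * p i (k, w).2
              + b * q i (k, w).2 else 0) = 0 := by
            split
            · exact hf w
            · rfl
          have h2 : (if (k, w).1 = j then g (k, w).2 + (-c) * p j (k, w).2
              + (-d) * q j (k, w).2 else 0) = 0 := by
            split
            · rw [hg]; ring
            · rfl
          rw [h1, h2, add_zero]
        · simp only [Pi.add_apply, Sum.elim_inr, Pi.zero_apply]
          have h3 := congrFun hcd w
          simp only [Pi.add_apply, Pi.smul_apply, smul_eq_mul] at h3
          linear_combination -h3
      have hxne : x ≠ 0 := by
        intro h0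
        apply hm'
        have h3 := congrFun h0 (i, m')
        simpa [hx, oneG, Ne.symm hji] using h3
      have hlow := hdist x hmv hxne
      have hhi : hammingNorm x ≤ δ + (δ + 1) := by
        calc hammingNorm x
            ≤ hammingNorm (oneG i a b f) + hammingNorm (oneG j (-c) (-d) g) := by
              rw [hx]; exact hn_add_le _ _
          _ ≤ δ + (δ + 1) := by
              refine add_le_add (le_trans (hn_oneG _ _ _ _) ?_)
                (le_trans (hn_oneG _ _ _ _) (hn_coefV _ _ _))
              have h4 := hn_le_of_zero (coefV δ a b f) m hm
              simpa using h4
      omega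
    refine ⟨?_, ?_, ?_⟩
    · have h5 := key 1 0 (fun s => -(p i s)) ⟨δ, by omega⟩
        (fun s => by ring) (by rw [coefV_d2 hδ1])
        ⟨⟨δ - 1, by omega⟩, by rw [coefV_d1 hδ1]; exact one_ne_zero⟩
      simpa using h5
    · have h5 := key 0 1 (fun s => -(q i s)) ⟨δ - 1, by omega⟩
        (fun s => by ring) (by rw [coefV_d1 hδ1])
        ⟨⟨δ, by omega⟩, by rw [coefV_d2 hδ1]; exact one_ne_zero⟩
      simpa using h5
    · intro m a b ha hb hab
      exact key a b (fun s => -(a * p i s + b * q i s)) (m.castLE (by omega))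
        (fun s => by ring)
        (by rw [coefV_e]; show -(a * p i m + b * q i m) = 0; rw [hab, neg_zero])
        ⟨⟨δ - 1, by omega⟩, by rw [coefV_d1 hδ1]; exact ha⟩
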